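/- Let M be an MOMDP with states S, actions A, transitions P, and rewards R, let K ⊆ S be a set of states, and let M_K be the induced MOMDP on K. Let s ∈ K, T ≥ 1, G > 0, and suppose 0 ≤ W(x) ≤ G for every x : Fin d → ℝ with 0 ≤ x i ≤ T for all i. Then for every α with 0 < α < 1, at least one of the following holds: (i) there exists a history-dependent policy π on M_K with V^π_{M_K}(s, 0, [], T) ≥ V*_M(s, 0, T) − α; or (ii) there exists a history-dependent policy π on M_K such that the probability that a length-T trajectory from s under π in M_K visits the absorbing exit state ⊥ exceeds α/G. -/

import Mathlib

/-- The optimal value function `V*` of an MOMDP, defined by backward recursion on the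
number `t` of remaining steps. -/
noncomputable def Vstar {S A : Type} [Fintype S] [Fintype A] [Nonempty A] {d : ℕ}
    (P : S → A → S → ℝ) (R : S → A → Fin d → ℝ) (γ : ℝ) (T : ℕ)
    (W : (Fin d → ℝ) → ℝ) : ℕ → S → (Fin d → ℝ) → ℝ
  | 0, _, v => W v
  | t + 1, s, v => Finset.univ.sup' Finset.univ_nonempty fun a : A =>
      ∑ s' : S, P s a s' * Vstar P R γ T W t s' (v + γ ^ (T - (t + 1)) • R s a)

/-- The value function `V^π(s, v, h, t)` of a history-dependent policy. -/
noncomputable def Vpol {S A : Type} [Fintype S] [Fintype A] {d : ℕ}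
    (P : S → A → S → ℝ) (R : S → A → Fin d → ℝ) (γ : ℝ) (T : ℕ)
    (W : (Fin d → ℝ) → ℝ) (pol : List (S × A) → S → ℕ → A → ℝ) :
    ℕ → S → (Fin d → ℝ) → List (S × A) → ℝ
  | 0, _, v, _ => W v
  | t + 1, s, v, h => ∑ a : A, pol h s (t + 1) a *
      ∑ s' : S, P s a s' *
        Vpol P R γ T W pol t s' (v + γ ^ (T - (t + 1)) • R s a) (h ++ [(s, a)])

/-- The probability `Pr^π[τ]` of a trajectory `τ` (a list of state-action pairs),
executed after history `h` with `t` steps remaining at the start of `τ`. -/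
noncomputable def PrTraj {S A : Type}
    (P : S → A → S → ℝ) (pol : List (S × A) → S → ℕ → A → ℝ) :
    List (S × A) → ℕ → List (S × A) → ℝ
  | _, _, [] => 1
  | h, t, (s, a) :: rest =>
      pol h s t a *
      (match rest with
       | [] => 1
       | (s', _) :: _ => P s a s') *
      PrTraj P pol (h ++ [(s, a)]) (t - 1) rest

/-- The transition function of the induced MOMDP `M_K` on the known states `K`,
with a single absorbing exit state `⊥ = Sum.inr ()` representing all unknown states. -/
noncomputable def PK {S A : Type} [Fintype S] [DecidableEq S]
    (P : S → A → S → ℝ) (K : Finset S) : (↥K ⊕ Unit) → A → (↥K ⊕ Unit) → ℝ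
  | Sum.inl s, a, Sum.inl s' => P s.1 a s'.1
  | Sum.inl s, a, Sum.inr _ => ∑ s' ∈ Kᶜ, P s.1 a s'
  | Sum.inr _, _, Sum.inr _ => 1
  | Sum.inr _, _, Sum.inl _ => 0

/-- The reward function of the induced MOMDP `M_K`: it agrees with `R` on `K × A` and
is the zero vector at the absorbing exit state. -/
def RK {S A : Type} {d : ℕ} (R : S → A → Fin d → ℝ) (K : Finset S) :
    (↥K ⊕ Unit) → A → Fin d → ℝ
  | Sum.inl s, a => R s.1 a
  | Sum.inr _, _ => fun _ => 0

set_option linter.unusedSectionVars false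
namespace EoE
variable {S A : Type} [Fintype S] [Fintype A] [Nonempty S] [Nonempty A] [DecidableEq S] {d : ℕ}

noncomputable def act (P : S → A → S → ℝ) (R : S → A → Fin d → ℝ) (γ : ℝ) (T : ℕ)
    (W : (Fin d → ℝ) → ℝ) (t : ℕ) (s : S) (v : Fin d → ℝ) : A :=
  (Finset.exists_mem_eq_sup' Finset.univ_nonempty
    (fun a : A => ∑ s' : S, P s a s' * Vstar P R γ T W t s' (v + γ ^ (T - (t+1)) • R s a))).choose

lemma act_spec (P : S → A → S → ℝ) (R : S → A → Fin d → ℝ) (γ : ℝ) (T : ℕ)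
    (W : (Fin d → ℝ) → ℝ) (t : ℕ) (s : S) (v : Fin d → ℝ) :
    Vstar P R γ T W (t+1) s v = ∑ s' : S, P s (act P R γ T W t s v) s' *
      Vstar P R γ T W t s' (v + γ ^ (T - (t+1)) • R s (act P R γ T W t s v)) := by
  have h := (Finset.exists_mem_eq_sup' Finset.univ_nonempty
    (fun a : A => ∑ s' : S, P s a s' * Vstar P R γ T W t s' (v + γ ^ (T - (t+1)) • R s a))).choose_spec.2
  rw [Vstar]; exact h

lemma act_ge (P : S → A → S → ℝ) (R : S → A → Fin d → ℝ) (γ : ℝ) (T : ℕ)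
    (W : (Fin d → ℝ) → ℝ) (t : ℕ) (s : S) (v : Fin d → ℝ) (a : A) :
    ∑ s' : S, P s a s' * Vstar P R γ T W t s' (v + γ ^ (T - (t+1)) • R s a) ≤
      Vstar P R γ T W (t+1) s v := by
  rw [Vstar]
  exact Finset.le_sup'
    (fun a : A => ∑ s' : S, P s a s' * Vstar P R γ T W t s' (v + γ ^ (T - (t+1)) • R s a))
    (Finset.mem_univ a)

noncomputable def vOf (R : S → A → Fin d → ℝ) (K : Finset S) (γ : ℝ) :
    List ((↥K ⊕ Unit) × A) → Fin d → ℝ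
  | [] => 0
  | x :: r => RK R K x.1 x.2 + γ • vOf R K γ r

lemma vOf_append (R : S → A → Fin d → ℝ) (K : Finset S) (γ : ℝ)
    (h : List ((↥K ⊕ Unit) × A)) (x : (↥K ⊕ Unit) × A) :
    vOf R K γ (h ++ [x]) = vOf R K γ h + γ ^ h.length • RK R K x.1 x.2 := by
  induction h with
  | nil => simp [vOf]
  | cons y r ih =>
      have h1 : vOf R K γ ((y :: r) ++ [x]) = RK R K y.1 y.2 + γ • vOf R K γ (r ++ [x]) := rfl
      have h2 : vOf R K γ (y :: r) = RK R K y.1 y.2 + γ • vOf R K γ r := rfl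
      rw [h1, h2, ih, smul_add, smul_smul, List.length_cons, pow_succ, mul_comm, ← add_assoc]


open Classical in
noncomputable def polK (P : S → A → S → ℝ) (R : S → A → Fin d → ℝ) (γ : ℝ) (T : ℕ)
    (W : (Fin d → ℝ) → ℝ) (K : Finset S) :
    List ((↥K ⊕ Unit) × A) → (↥K ⊕ Unit) → ℕ → A → ℝ :=
  fun h st t a => match st with
  | Sum.inl s => if a = act P R γ T W (t-1) s.1 (vOf R K γ h) then 1 else 0
  | Sum.inr _ => if a = Classical.arbitrary A then 1 else 0

lemma polK_nonneg (P : S → A → S → ℝ) (R : S → A → Fin d → ℝ) (γ : ℝ) (T : ℕ)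
    (W : (Fin d → ℝ) → ℝ) (K : Finset S) (h) (st) (t) (a) :
    0 ≤ polK P R γ T W K h st t a := by
  unfold polK; cases st <;> dsimp <;> split <;> norm_num

lemma polK_sum (P : S → A → S → ℝ) (R : S → A → Fin d → ℝ) (γ : ℝ) (T : ℕ)
    (W : (Fin d → ℝ) → ℝ) (K : Finset S) (h) (st) (t) :
    ∑ a, polK P R γ T W K h st t a = 1 := by
  unfold polK
  cases st with
  | inl s =>
      dsimp only; simp; rw [Finset.card_eq_one]
      exact ⟨act P R γ T W (t-1) s.1 (vOf R K γ h), by ext x; simp⟩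
  | inr u =>
      dsimp only; simp; rw [Finset.card_eq_one]
      exact ⟨Classical.arbitrary A, by ext x; simp⟩

lemma PK_nonneg (P : S → A → S → ℝ) (hP0 : ∀ s a s', 0 ≤ P s a s') (K : Finset S)
    (st : ↥K ⊕ Unit) (a : A) (st' : ↥K ⊕ Unit) : 0 ≤ PK P K st a st' := by
  cases st <;> cases st' <;> simp [PK, hP0] <;>
    exact Finset.sum_nonneg fun i _ => hP0 _ _ _

lemma PK_sum (P : S → A → S → ℝ) (hP1 : ∀ s a, ∑ s', P s a s' = 1) (K : Finset S)
    (st : ↥K ⊕ Unit) (a : A) : ∑ st', PK P K st a st' = 1 := by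
  cases st with
  | inl s =>
      rw [Fintype.sum_sum_type]
      simp only [PK]
      rw [Finset.sum_const, Finset.card_univ, Fintype.card_unit, one_smul]
      rw [Finset.sum_coe_sort K (fun s' => P s.1 a s'), Finset.sum_add_sum_compl]
      exact hP1 _ _
  | inr u =>
      rw [Fintype.sum_sum_type]
      simp [PK]

noncomputable def esc (P : S → A → S → ℝ) (K : Finset S)
    (pol : List ((↥K ⊕ Unit) × A) → (↥K ⊕ Unit) → ℕ → A → ℝ) :
    ℕ → (↥K ⊕ Unit) → List ((↥K ⊕ Unit) × A) → ℝ
  | 0, _, _ => 0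
  | _+1, Sum.inr _, _ => 1
  | t+1, Sum.inl s, h => ∑ a : A, pol h (Sum.inl s) (t+1) a *
      ∑ s' : ↥K ⊕ Unit, PK P K (Sum.inl s) a s' * esc P K pol t s' (h ++ [(Sum.inl s, a)])

lemma esc_nonneg (P : S → A → S → ℝ) (hP0 : ∀ s a s', 0 ≤ P s a s') (K : Finset S)
    (pol : List ((↥K ⊕ Unit) × A) → (↥K ⊕ Unit) → ℕ → A → ℝ)
    (hpol : ∀ h st t a, 0 ≤ pol h st t a) :
    ∀ t st h, 0 ≤ esc P K pol t st h := by
  intro t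
  induction t with
  | zero => intro st h; rw [esc]
  | succ t ih =>
      intro st h
      cases st with
      | inr u => rw [esc]; norm_num
      | inl s =>
          rw [esc]
          refine Finset.sum_nonneg fun a _ => mul_nonneg (hpol _ _ _ _) ?_
          exact Finset.sum_nonneg fun s' _ =>
            mul_nonneg (PK_nonneg P hP0 K _ _ _) (ih _ _)

lemma RK_bounds (R : S → A → Fin d → ℝ) (hR0 : ∀ s a i, 0 ≤ R s a i)
    (hR1 : ∀ s a i, R s a i ≤ 1) (K : Finset S) (st : ↥K ⊕ Unit) (a : A) (i : Fin d) :
    0 ≤ RK R K st a i ∧ RK R K st a i ≤ 1 := by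
  cases st <;> simp [RK, hR0, hR1]

lemma vOf_bounds (R : S → A → Fin d → ℝ) (hR0 : ∀ s a i, 0 ≤ R s a i)
    (hR1 : ∀ s a i, R s a i ≤ 1) (K : Finset S) (γ : ℝ) (hγ0 : 0 ≤ γ) (hγ1 : γ ≤ 1)
    (h : List ((↥K ⊕ Unit) × A)) (i : Fin d) :
    0 ≤ vOf R K γ h i ∧ vOf R K γ h i ≤ h.length := by
  induction h with
  | nil => simp [vOf]
  | cons x r ih =>
      have hx := RK_bounds R hR0 hR1 K x.1 x.2 i
      have h1 : vOf R K γ (x :: r) i = RK R K x.1 x.2 i + γ * vOf R K γ r i := rfl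
      constructor
      · rw [h1]; exact add_nonneg hx.1 (mul_nonneg hγ0 ih.1)
      · rw [h1, List.length_cons]
        push_cast
        have : γ * vOf R K γ r i ≤ r.length := by
          calc γ * vOf R K γ r i ≤ 1 * vOf R K γ r i :=
                mul_le_mul_of_nonneg_right hγ1 ih.1
            _ = vOf R K γ r i := one_mul _
            _ ≤ r.length := ih.2
        linarith [hx.2]


open Classical in
lemma sum_indicator_mul {α : Type} [Fintype α] (c : α) (f : α → ℝ) :
    ∑ a, (if a = c then (1:ℝ) else 0) * f a = f c := by
  have h1 : ∀ a, (if a = c then (1:ℝ) else 0) * f a = if a = c then f a else 0 := by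
    intro a; split <;> simp [*]
  rw [Finset.sum_congr rfl fun a _ => h1 a]
  rw [Finset.sum_eq_single_of_mem c (Finset.mem_univ c)]
  · simp
  · intro b _ hb; simp [hb]

lemma Vstar_le_G (P : S → A → S → ℝ) (hP0 : ∀ s a s', 0 ≤ P s a s')
    (hP1 : ∀ s a, ∑ s', P s a s' = 1) (R : S → A → Fin d → ℝ)
    (hR0 : ∀ s a i, 0 ≤ R s a i) (hR1 : ∀ s a i, R s a i ≤ 1)
    (γ : ℝ) (hγ0 : 0 ≤ γ) (hγ1 : γ < 1) (T : ℕ) (W : (Fin d → ℝ) → ℝ) (G : ℝ)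
    (hWbd : ∀ x : Fin d → ℝ, (∀ i, 0 ≤ x i ∧ x i ≤ T) → 0 ≤ W x ∧ W x ≤ G) :
    ∀ t, t ≤ T → ∀ s v, (∀ i, 0 ≤ v i ∧ v i ≤ ((T - t : ℕ) : ℝ)) →
      Vstar P R γ T W t s v ≤ G := by
  intro t
  induction t with
  | zero =>
      intro _ s v hv
      rw [Vstar]
      refine (hWbd v fun i => ⟨(hv i).1, ?_⟩).2
      simpa using (hv i).2
  | succ t ih =>
      intro ht s v hv
      rw [Vstar]
      apply Finset.sup'_le
      intro a _
      have hv' : ∀ i, 0 ≤ (v + γ ^ (T - (t+1)) • R s a) i ∧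
          (v + γ ^ (T - (t+1)) • R s a) i ≤ ((T - t : ℕ) : ℝ) := by
        intro i
        have hpow : γ ^ (T - (t+1)) ≤ 1 := pow_le_one₀ hγ0 hγ1.le
        have hpow0 : 0 ≤ γ ^ (T - (t+1)) := pow_nonneg hγ0 _
        have hr : γ ^ (T - (t+1)) * R s a i ≤ 1 :=
          mul_le_one₀ hpow (hR0 s a i) (hR1 s a i)
        have hcast : ((T - (t+1) : ℕ) : ℝ) + 1 = ((T - t : ℕ) : ℝ) := by
          have : (T - (t+1)) + 1 = T - t := by omega
          exact_mod_cast congrArg (Nat.cast : ℕ → ℝ) this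
        constructor
        · exact add_nonneg (hv i).1 (mul_nonneg hpow0 (hR0 s a i))
        · have := (hv i).2
          simp only [Pi.add_apply, Pi.smul_apply, smul_eq_mul]
          linarith
      calc ∑ s', P s a s' * Vstar P R γ T W t s' (v + γ ^ (T - (t+1)) • R s a)
          ≤ ∑ s', P s a s' * G := by
            refine Finset.sum_le_sum fun s' _ => ?_
            exact mul_le_mul_of_nonneg_left
              (ih (le_of_lt (Nat.lt_of_succ_le ht)) s' _ hv') (hP0 s a s')
        _ = G := by rw [← Finset.sum_mul, hP1, one_mul]

lemma Vpol_nonneg {S' : Type} [Fintype S'] (P' : S' → A → S' → ℝ)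
    (hP0' : ∀ s a s', 0 ≤ P' s a s') (R' : S' → A → Fin d → ℝ)
    (hR0' : ∀ s a i, 0 ≤ R' s a i) (hR1' : ∀ s a i, R' s a i ≤ 1)
    (γ : ℝ) (hγ0 : 0 ≤ γ) (hγ1 : γ < 1) (T : ℕ) (W : (Fin d → ℝ) → ℝ)
    (hW : ∀ x : Fin d → ℝ, (∀ i, 0 ≤ x i ∧ x i ≤ T) → 0 ≤ W x)
    (pol : List (S' × A) → S' → ℕ → A → ℝ) (hpol : ∀ h st t a, 0 ≤ pol h st t a) :
    ∀ t, t ≤ T → ∀ st v h, (∀ i, 0 ≤ v i ∧ v i ≤ ((T - t : ℕ) : ℝ)) →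
      0 ≤ Vpol P' R' γ T W pol t st v h := by
  intro t
  induction t with
  | zero =>
      intro _ st v h hv
      rw [Vpol]
      refine hW v fun i => ⟨(hv i).1, ?_⟩
      simpa using (hv i).2
  | succ t ih =>
      intro ht st v h hv
      rw [Vpol]
      refine Finset.sum_nonneg fun a _ => mul_nonneg (hpol _ _ _ _) ?_
      refine Finset.sum_nonneg fun s' _ => mul_nonneg (hP0' _ _ _) ?_
      refine ih (le_of_lt (Nat.lt_of_succ_le ht)) s' _ _ ?_
      intro i
      have hpow : γ ^ (T - (t+1)) ≤ 1 := pow_le_one₀ hγ0 hγ1.le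
      have hpow0 : 0 ≤ γ ^ (T - (t+1)) := pow_nonneg hγ0 _
      have hr : γ ^ (T - (t+1)) * R' st a i ≤ 1 :=
        mul_le_one₀ hpow (hR0' st a i) (hR1' st a i)
      have hcast : ((T - (t+1) : ℕ) : ℝ) + 1 = ((T - t : ℕ) : ℝ) := by
        have : (T - (t+1)) + 1 = T - t := by omega
        exact_mod_cast congrArg (Nat.cast : ℕ → ℝ) this
      constructor
      · exact add_nonneg (hv i).1 (mul_nonneg hpow0 (hR0' st a i))
      · have := (hv i).2
        simp only [Pi.add_apply, Pi.smul_apply, smul_eq_mul]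
        linarith


lemma main_ineq (P : S → A → S → ℝ) (hP0 : ∀ s a s', 0 ≤ P s a s')
    (hP1 : ∀ s a, ∑ s', P s a s' = 1) (R : S → A → Fin d → ℝ)
    (hR0 : ∀ s a i, 0 ≤ R s a i) (hR1 : ∀ s a i, R s a i ≤ 1)
    (γ : ℝ) (hγ0 : 0 ≤ γ) (hγ1 : γ < 1) (T : ℕ) (W : (Fin d → ℝ) → ℝ) (G : ℝ)
    (hG : 0 < G)
    (hWbd : ∀ x : Fin d → ℝ, (∀ i, 0 ≤ x i ∧ x i ≤ T) → 0 ≤ W x ∧ W x ≤ G)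
    (K : Finset S) :
    ∀ t, t ≤ T → ∀ h : List ((↥K ⊕ Unit) × A), h.length + t = T → ∀ s : ↥K,
      Vstar P R γ T W t s.1 (vOf R K γ h) -
        G * esc P K (polK P R γ T W K) t (Sum.inl s) h ≤
      Vpol (PK P K) (RK R K) γ T W (polK P R γ T W K) t (Sum.inl s) (vOf R K γ h) h := by
  intro t
  induction t with
  | zero =>
      intro _ h _ s
      rw [Vstar, Vpol, esc]
      simp
  | succ t ih =>
      classical
      intro ht h hlen s
      have ht' : t ≤ T := le_of_lt (Nat.lt_of_succ_le ht)
      have hlen0 : h.length = T - (t+1) := by omega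
      set v : Fin d → ℝ := vOf R K γ h with hvdef
      set a0 : A := act P R γ T W t s.1 v with ha0
      set v' : Fin d → ℝ := v + γ ^ (T - (t+1)) • R s.1 a0 with hv'
      set h' : List ((↥K ⊕ Unit) × A) := h ++ [(Sum.inl s, a0)] with hh'
      have hlen' : h'.length + t = T := by
        rw [hh', List.length_append]; simp; omega
      have hvOfh' : vOf R K γ h' = v' := by
        rw [hh', vOf_append, hlen0]
        rfl
      have hcollapse : ∀ F : A → ℝ,
          (∑ a : A, polK P R γ T W K h (Sum.inl s) (t+1) a * F a) = F a0 := by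
        intro F
        have heq : (∑ a : A, polK P R γ T W K h (Sum.inl s) (t+1) a * F a)
            = ∑ a : A, (if a = a0 then (1:ℝ) else 0) * F a := by
          refine Finset.sum_congr rfl fun a _ => ?_
          congr 1
        rw [heq]
        exact sum_indicator_mul a0 F
      have hv'inv : ∀ i, 0 ≤ v' i ∧ v' i ≤ ((T - t : ℕ) : ℝ) := by
        intro i
        have hb := vOf_bounds R hR0 hR1 K γ hγ0 hγ1.le h' i
        rw [hvOfh'] at hb
        refine ⟨hb.1, le_trans hb.2 ?_⟩
        have : h'.length = T - t := by omega
        rw [this]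
      have hIH : ∀ s' : ↥K,
          Vstar P R γ T W t s'.1 v' -
            G * esc P K (polK P R γ T W K) t (Sum.inl s') h' ≤
          Vpol (PK P K) (RK R K) γ T W (polK P R γ T W K) t (Sum.inl s') v' h' := by
        intro s'
        have := ih ht' h' hlen' s'
        rwa [hvOfh'] at this
      set X := ∑ s' : ↥K, P s.1 a0 s'.1 * Vstar P R γ T W t s'.1 v' with hX
      set Y := ∑ s' : ↥K, P s.1 a0 s'.1 *
        esc P K (polK P R γ T W K) t (Sum.inl s') h' with hY
      set Z := ∑ s' : ↥K, P s.1 a0 s'.1 *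
        Vpol (PK P K) (RK R K) γ T W (polK P R γ T W K) t (Sum.inl s') v' h' with hZ
      set Wc := ∑ s'' ∈ Kᶜ, P s.1 a0 s'' * Vstar P R γ T W t s'' v' with hWc
      set pout := ∑ s'' ∈ Kᶜ, P s.1 a0 s'' with hpout
      set E := esc P K (polK P R γ T W K) t (Sum.inr ()) h' with hE
      set Vb := Vpol (PK P K) (RK R K) γ T W (polK P R γ T W K) t (Sum.inr ()) v' h'
        with hVb
      have hpout0 : 0 ≤ pout := Finset.sum_nonneg fun i _ => hP0 _ _ _
      have hUnit : ∀ f : Unit → ℝ, ∑ u : Unit, f u = f () := fun f => by simp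
      have hVsplit : Vstar P R γ T W (t+1) s.1 v = X + Wc := by
        rw [act_spec, ← Finset.sum_add_sum_compl K
          (fun s'' => P s.1 a0 s'' * Vstar P R γ T W t s'' v'), hX, hWc,
          Finset.sum_coe_sort K (fun s'' => P s.1 a0 s'' * Vstar P R γ T W t s'' v')]
      have hesc : esc P K (polK P R γ T W K) (t+1) (Sum.inl s) h = Y + pout * E := by
        rw [esc, hcollapse, Fintype.sum_sum_type, hUnit]
        rfl
      have hVpol : Vpol (PK P K) (RK R K) γ T W (polK P R γ T W K) (t+1)
          (Sum.inl s) v h = Z + pout * Vb := by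
        rw [Vpol, hcollapse, Fintype.sum_sum_type, hUnit]
        rfl
      have hsum1 : X - G * Y ≤ Z := by
        have h1 : ∀ s' : ↥K, P s.1 a0 s'.1 *
            (Vstar P R γ T W t s'.1 v' -
              G * esc P K (polK P R γ T W K) t (Sum.inl s') h') ≤
            P s.1 a0 s'.1 *
              Vpol (PK P K) (RK R K) γ T W (polK P R γ T W K) t (Sum.inl s') v' h' :=
          fun s' => mul_le_mul_of_nonneg_left (hIH s') (hP0 _ _ _)
        have h2 := Finset.sum_le_sum (fun s' (_ : s' ∈ Finset.univ) => h1 s')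
        have hdistr : ∀ s' : ↥K, P s.1 a0 s'.1 *
            (Vstar P R γ T W t s'.1 v' -
              G * esc P K (polK P R γ T W K) t (Sum.inl s') h') =
            P s.1 a0 s'.1 * Vstar P R γ T W t s'.1 v' -
              G * (P s.1 a0 s'.1 * esc P K (polK P R γ T W K) t (Sum.inl s') h') :=
          fun s' => by ring
        have h3 : (∑ s' : ↥K, P s.1 a0 s'.1 *
            (Vstar P R γ T W t s'.1 v' -
              G * esc P K (polK P R γ T W K) t (Sum.inl s') h')) = X - G * Y := by
          rw [Finset.sum_congr rfl fun s' _ => hdistr s', Finset.sum_sub_distrib,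
            ← Finset.mul_sum, hX, hY]
        rw [h3] at h2
        exact h2
      have hKc : Wc ≤ pout * Vb + G * (pout * E) := by
        cases t with
        | zero =>
            have hE0 : E = 0 := by rw [hE, esc]
            have hVb0 : Vb = W v' := by rw [hVb, Vpol]
            have hWceq : Wc = pout * W v' := by
              rw [hWc, hpout, Finset.sum_mul]
              refine Finset.sum_congr rfl fun s'' _ => ?_
              rw [Vstar]
            rw [hWceq, hE0, hVb0, mul_zero, mul_zero, add_zero]
        | succ t'' =>
            have hE1 : E = 1 := by rw [hE, esc]
            have hVb0 : 0 ≤ Vb := by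
              rw [hVb]
              refine Vpol_nonneg (PK P K) (PK_nonneg P hP0 K)
                (RK R K) (fun st a i => (RK_bounds R hR0 hR1 K st a i).1)
                (fun st a i => (RK_bounds R hR0 hR1 K st a i).2)
                γ hγ0 hγ1 T W (fun x hx => (hWbd x hx).1)
                (polK P R γ T W K) (polK_nonneg P R γ T W K)
                (t''+1) ht' _ _ _ hv'inv
            have hWcle : Wc ≤ pout * G := by
              rw [hWc, hpout, Finset.sum_mul]
              refine Finset.sum_le_sum fun s'' _ => ?_
              exact mul_le_mul_of_nonneg_left
                (Vstar_le_G P hP0 hP1 R hR0 hR1 γ hγ0 hγ1 T W G hWbd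
                  (t''+1) ht' s'' v' hv'inv) (hP0 _ _ _)
            have hfin : pout * G ≤ pout * Vb + G * (pout * 1) := by
              nlinarith [mul_nonneg hpout0 hVb0]
            rw [hE1]
            exact le_trans hWcle hfin
      rw [hVsplit, hesc, hVpol]
      linarith


lemma sum_if_eq {α : Type} [Fintype α] {D : DecidableEq α} (c : α) (f : α → ℝ) :
    ∑ a, (if a = c then f a else 0) = f c := by
  rw [Finset.sum_eq_single_of_mem c (Finset.mem_univ c)]
  · simp
  · intro b _ hb; simp [hb]

lemma sum_if_eq' {α : Type} [Fintype α] {D : DecidableEq α} (c : α) (f : α → ℝ) :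
    ∑ a, (if c = a then f a else 0) = f c := by
  rw [Finset.sum_eq_single_of_mem c (Finset.mem_univ c)]
  · simp
  · intro b _ hb; simp [Ne.symm hb]

lemma sum_fin_succ_fun {X : Type} [Fintype X] (t : ℕ) (f : (Fin (t+1) → X) → ℝ) :
    ∑ τ : Fin (t+1) → X, f τ = ∑ x : X, ∑ τ' : Fin t → X, f (Fin.cons x τ') := by
  rw [← Equiv.sum_comp (Fin.consEquiv fun _ : Fin (t+1) => X) f,
    Fintype.sum_prod_type]
  rfl

lemma sum_fin_zero_fun {X : Type} [Fintype X] (g : (Fin 0 → X) → ℝ) :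
    ∑ τ' : Fin 0 → X, g τ' = g (fun i => i.elim0) := by
  haveI : Subsingleton (Fin 0 → X) := ⟨fun f g => funext fun i => i.elim0⟩
  exact Fintype.sum_subsingleton _ _

lemma prtraj_singleton {S' : Type} (P' : S' → A → S' → ℝ)
    (pol : List (S' × A) → S' → ℕ → A → ℝ) (h : List (S' × A)) (n : ℕ) (x : S' × A) :
    PrTraj P' pol h n [x] = pol h x.1 n x.2 := by
  obtain ⟨s, a⟩ := x
  simp [PrTraj]

lemma prtraj_cons_cons {S' : Type} (P' : S' → A → S' → ℝ)
    (pol : List (S' × A) → S' → ℕ → A → ℝ) (h : List (S' × A)) (n : ℕ)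
    (x y : S' × A) (rest : List (S' × A)) :
    PrTraj P' pol h n (x :: y :: rest) =
      pol h x.1 n x.2 * P' x.1 x.2 y.1 *
        PrTraj P' pol (h ++ [x]) (n - 1) (y :: rest) := by
  obtain ⟨s, a⟩ := x
  obtain ⟨s', a'⟩ := y
  rfl

lemma ofFn_cons {X : Type} (n : ℕ) (x : X) (τ' : Fin n → X) :
    List.ofFn (Fin.cons x τ') = x :: List.ofFn τ' := by
  rw [List.ofFn_succ]
  congr 1

open Classical in
lemma tot {S' : Type} [Fintype S'] (P' : S' → A → S' → ℝ)
    (hP1' : ∀ s a, ∑ s', P' s a s' = 1)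
    (pol : List (S' × A) → S' → ℕ → A → ℝ)
    (hpol1 : ∀ h st t, ∑ a, pol h st t a = 1) :
    ∀ t (h : List (S' × A)) (s0 : S'),
      (∑ τ : Fin (t+1) → S' × A,
        (if (τ ⟨0, Nat.succ_pos t⟩).1 = s0
          then PrTraj P' pol h (t+1) (List.ofFn τ) else 0)) = 1 := by
  classical
  intro t
  induction t with
  | zero =>
      intro h s0
      rw [sum_fin_succ_fun]
      have h1 : ∀ x : S' × A, (∑ τ' : Fin 0 → S' × A,
          (if ((Fin.cons (α := fun _ => S' × A) x τ') ⟨0, Nat.succ_pos 0⟩).1 = s0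
            then PrTraj P' pol h 1 (List.ofFn (Fin.cons x τ')) else 0)) =
          if x.1 = s0 then pol h x.1 1 x.2 else 0 := by
        intro x
        rw [sum_fin_zero_fun]
        simp only [Fin.mk_zero, Fin.cons_zero, List.ofFn_zero, ofFn_cons,
          prtraj_singleton]
      rw [Finset.sum_congr rfl fun x _ => h1 x, Fintype.sum_prod_type]
      have h2 : ∀ s : S', (∑ a : A, if s = s0 then pol h s 1 a else 0) =
          if s = s0 then 1 else 0 := by
        intro s
        split
        · rw [hpol1]
        · simp
      rw [Finset.sum_congr rfl fun s _ => h2 s, sum_if_eq]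
  | succ t ih =>
      intro h s0
      rw [sum_fin_succ_fun]
      have h1 : ∀ x : S' × A, (∑ τ' : Fin (t+1) → S' × A,
          (if ((Fin.cons (α := fun _ => S' × A) x τ') ⟨0, Nat.succ_pos (t+1)⟩).1 = s0
            then PrTraj P' pol h (t+2) (List.ofFn (Fin.cons x τ')) else 0)) =
          if x.1 = s0 then pol h x.1 (t+2) x.2 else 0 := by
        intro x
        have h2 : ∀ τ' : Fin (t+1) → S' × A,
            (if ((Fin.cons (α := fun _ => S' × A) x τ') ⟨0, Nat.succ_pos (t+1)⟩).1 = s0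
              then PrTraj P' pol h (t+2) (List.ofFn (Fin.cons x τ')) else 0) =
            ∑ s' : S', (if (τ' ⟨0, Nat.succ_pos t⟩).1 = s' then
              (if x.1 = s0 then pol h x.1 (t+2) x.2 * P' x.1 x.2 s' *
                PrTraj P' pol (h ++ [x]) (t+1) (List.ofFn τ') else 0) else 0) := by
          intro τ'
          rw [ofFn_cons, List.ofFn_succ, prtraj_cons_cons, ← List.ofFn_succ]
          simp only [Fin.mk_zero, Fin.cons_zero]
          rw [show t + 2 - 1 = t + 1 from rfl]
          exact (sum_if_eq' (D := fun a b => Classical.propDecidable (a = b))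
            ((τ' (0 : Fin (t+1))).1 : S')
            (fun s' => if x.1 = s0 then pol h x.1 (t+2) x.2 * P' x.1 x.2 s' *
              PrTraj P' pol (h ++ [x]) (t+1) (List.ofFn τ') else 0)).symm
        rw [Finset.sum_congr rfl fun τ' _ => h2 τ', Finset.sum_comm]
        have h3 : ∀ s' : S', (∑ τ' : Fin (t+1) → S' × A,
            (if (τ' ⟨0, Nat.succ_pos t⟩).1 = s' then
              (if x.1 = s0 then pol h x.1 (t+2) x.2 * P' x.1 x.2 s' *
                PrTraj P' pol (h ++ [x]) (t+1) (List.ofFn τ') else 0) else 0)) =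
            (if x.1 = s0 then pol h x.1 (t+2) x.2 * P' x.1 x.2 s' else 0) := by
          intro s'
          have h4 : ∀ τ' : Fin (t+1) → S' × A,
              (if (τ' ⟨0, Nat.succ_pos t⟩).1 = s' then
                (if x.1 = s0 then pol h x.1 (t+2) x.2 * P' x.1 x.2 s' *
                  PrTraj P' pol (h ++ [x]) (t+1) (List.ofFn τ') else 0) else 0) =
              (if x.1 = s0 then pol h x.1 (t+2) x.2 * P' x.1 x.2 s' else 0) *
                (if (τ' ⟨0, Nat.succ_pos t⟩).1 = s' then
                  PrTraj P' pol (h ++ [x]) (t+1) (List.ofFn τ') else 0) := by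
            intro τ'
            split <;> split <;> ring
          rw [Finset.sum_congr rfl fun τ' _ => h4 τ', ← Finset.mul_sum,
            ih (h ++ [x]) s', mul_one]
        rw [Finset.sum_congr rfl fun s' _ => h3 s']
        split
        · rw [← Finset.mul_sum, hP1', mul_one]
        · simp
      rw [Finset.sum_congr rfl fun x _ => h1 x, Fintype.sum_prod_type]
      have h2 : ∀ s : S', (∑ a : A, if s = s0 then pol h s (t+2) a else 0) =
          if s = s0 then 1 else 0 := by
        intro s
        split
        · rw [hpol1]
        · simp
      rw [Finset.sum_congr rfl fun s _ => h2 s, sum_if_eq]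


open Classical in
lemma esc_eq (P : S → A → S → ℝ) (hP1 : ∀ s a, ∑ s', P s a s' = 1)
    (K : Finset S) (pol : List ((↥K ⊕ Unit) × A) → (↥K ⊕ Unit) → ℕ → A → ℝ)
    (hpol1 : ∀ h st t, ∑ a, pol h st t a = 1) :
    ∀ t (h : List ((↥K ⊕ Unit) × A)) (s0 : ↥K ⊕ Unit),
      (∑ τ : Fin (t+1) → (↥K ⊕ Unit) × A,
        (if (τ ⟨0, Nat.succ_pos t⟩).1 = s0 ∧ (∃ k, (τ k).1 = Sum.inr ())
          then PrTraj (PK P K) pol h (t+1) (List.ofFn τ) else 0)) =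
      esc P K pol (t+1) s0 h := by
  have hPK1 : ∀ st a, ∑ st', PK P K st a st' = 1 := PK_sum P hP1 K
  intro t
  induction t with
  | zero =>
      intro h s0
      rw [sum_fin_succ_fun]
      have h1 : ∀ x : (↥K ⊕ Unit) × A, (∑ τ' : Fin 0 → (↥K ⊕ Unit) × A,
          (if ((Fin.cons (α := fun _ => (↥K ⊕ Unit) × A) x τ') ⟨0, Nat.succ_pos 0⟩).1 = s0 ∧
              (∃ k, ((Fin.cons (α := fun _ => (↥K ⊕ Unit) × A) x τ') k).1 = Sum.inr ())
            then PrTraj (PK P K) pol h 1 (List.ofFn (Fin.cons x τ')) else 0)) =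
          (if x.1 = s0 ∧ x.1 = Sum.inr () then pol h x.1 1 x.2 else 0) := by
        intro x
        rw [sum_fin_zero_fun]
        rw [ofFn_cons]
        simp only [List.ofFn_zero, prtraj_singleton, Fin.mk_zero, Fin.cons_zero,
          Fin.exists_fin_one]
        refine if_congr (and_congr_right fun _ => ?_) rfl rfl
        constructor
        · rintro ⟨k, hk⟩
          have hk0 : k = 0 := Fin.fin_one_eq_zero k
          rw [hk0] at hk
          simpa [Fin.cons_zero] using hk
        · intro hx
          exact ⟨0, by simpa [Fin.cons_zero] using hx⟩
      rw [Finset.sum_congr rfl fun x _ => h1 x]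
      cases s0 with
      | inl s =>
          have hz : ∀ x : (↥K ⊕ Unit) × A,
              (if x.1 = Sum.inl s ∧ x.1 = Sum.inr () then pol h x.1 1 x.2 else 0) = 0 := by
            intro x
            split
            · rename_i hc
              rw [hc.1] at hc
              exact absurd hc.2 (by simp)
            · rfl
          rw [Finset.sum_congr rfl fun x _ => hz x, Finset.sum_const, smul_zero]
          rw [esc]
          have : ∀ a : A, pol h (Sum.inl s) (0+1) a *
              (∑ s' : ↥K ⊕ Unit, PK P K (Sum.inl s) a s' *
                esc P K pol 0 s' (h ++ [(Sum.inl s, a)])) = 0 := by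
            intro a
            have : ∀ s' : ↥K ⊕ Unit, PK P K (Sum.inl s) a s' *
                esc P K pol 0 s' (h ++ [(Sum.inl s, a)]) = 0 := by
              intro s'; rw [esc, mul_zero]
            rw [Finset.sum_congr rfl fun s' _ => this s', Finset.sum_const, smul_zero,
              mul_zero]
          rw [Finset.sum_congr rfl fun a _ => this a, Finset.sum_const, smul_zero]
      | inr u =>
          obtain ⟨⟩ := u
          have hc : ∀ x : (↥K ⊕ Unit) × A,
              (if x.1 = Sum.inr () ∧ x.1 = Sum.inr () then pol h x.1 1 x.2 else 0) =
              (if x.1 = Sum.inr () then pol h x.1 1 x.2 else 0) := by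
            intro x; exact if_congr and_self_iff rfl rfl
          rw [Finset.sum_congr rfl fun x _ => hc x, Fintype.sum_prod_type]
          have h2 : ∀ st : ↥K ⊕ Unit, (∑ a : A, if st = Sum.inr () then pol h st 1 a else 0) =
              if st = Sum.inr () then 1 else 0 := by
            intro st; split
            · rw [hpol1]
            · simp
          rw [Finset.sum_congr rfl fun st _ => h2 st, sum_if_eq, esc]
  | succ t ih =>
      intro h s0
      cases s0 with
      | inr u =>
          obtain ⟨⟩ := u
          have hc : ∀ τ : Fin (t+2) → (↥K ⊕ Unit) × A,
              (if (τ ⟨0, Nat.succ_pos (t+1)⟩).1 = Sum.inr () ∧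
                  (∃ k, (τ k).1 = Sum.inr ())
                then PrTraj (PK P K) pol h (t+2) (List.ofFn τ) else 0) =
              (if (τ ⟨0, Nat.succ_pos (t+1)⟩).1 = Sum.inr ()
                then PrTraj (PK P K) pol h (t+2) (List.ofFn τ) else 0) := by
            intro τ
            refine if_congr ⟨fun hx => hx.1, fun hx => ⟨hx, ⟨⟨0, Nat.succ_pos (t+1)⟩, hx⟩⟩⟩ rfl rfl
          rw [Finset.sum_congr rfl fun τ _ => hc τ, esc]
          refine Eq.trans (Finset.sum_congr rfl fun τ _ => ?_)
            (tot (PK P K) hPK1 pol hpol1 (t+1) h (Sum.inr ()))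
          by_cases hx : (τ ⟨0, Nat.succ_pos (t+1)⟩).1 = Sum.inr ()
          · rw [if_pos hx, if_pos hx]
          · rw [if_neg hx, if_neg hx]
      | inl s =>
          rw [sum_fin_succ_fun]
          have h1 : ∀ x : (↥K ⊕ Unit) × A, (∑ τ' : Fin (t+1) → (↥K ⊕ Unit) × A,
              (if ((Fin.cons (α := fun _ => (↥K ⊕ Unit) × A) x τ') ⟨0, Nat.succ_pos (t+1)⟩).1 = Sum.inl s ∧
                  (∃ k, ((Fin.cons (α := fun _ => (↥K ⊕ Unit) × A) x τ') k).1 = Sum.inr ())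
                then PrTraj (PK P K) pol h (t+2) (List.ofFn (Fin.cons x τ')) else 0)) =
              (if x.1 = Sum.inl s then pol h x.1 (t+2) x.2 *
                ∑ s' : ↥K ⊕ Unit, PK P K x.1 x.2 s' *
                  esc P K pol (t+1) s' (h ++ [x]) else 0) := by
            intro x
            have h2 : ∀ τ' : Fin (t+1) → (↥K ⊕ Unit) × A,
                (if ((Fin.cons (α := fun _ => (↥K ⊕ Unit) × A) x τ') ⟨0, Nat.succ_pos (t+1)⟩).1 = Sum.inl s ∧
                    (∃ k, ((Fin.cons (α := fun _ => (↥K ⊕ Unit) × A) x τ') k).1 = Sum.inr ())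
                  then PrTraj (PK P K) pol h (t+2) (List.ofFn (Fin.cons x τ')) else 0) =
                ∑ s' : ↥K ⊕ Unit, (if (τ' ⟨0, Nat.succ_pos t⟩).1 = s' ∧
                    (x.1 = Sum.inl s ∧ (∃ k, (τ' k).1 = Sum.inr ())) then
                  pol h x.1 (t+2) x.2 * PK P K x.1 x.2 s' *
                    PrTraj (PK P K) pol (h ++ [x]) (t+1) (List.ofFn τ') else 0) := by
              intro τ'
              have hcnd : (((Fin.cons (α := fun _ => (↥K ⊕ Unit) × A) x τ') ⟨0, Nat.succ_pos (t+1)⟩).1 = Sum.inl s ∧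
                  (∃ k, ((Fin.cons (α := fun _ => (↥K ⊕ Unit) × A) x τ') k).1 = Sum.inr ())) ↔
                  (x.1 = Sum.inl s ∧ (∃ k, (τ' k).1 = Sum.inr ())) := by
                simp only [Fin.mk_zero, Fin.cons_zero, Fin.exists_fin_succ, Fin.cons_succ]
                constructor
                · rintro ⟨hx, hor | he⟩
                  · rw [hx] at hor; exact absurd hor (by simp)
                  · exact ⟨hx, he⟩
                · rintro ⟨hx, he⟩
                  exact ⟨hx, Or.inr he⟩
              rw [if_congr hcnd rfl rfl, ofFn_cons, List.ofFn_succ, prtraj_cons_cons,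
                ← List.ofFn_succ, show t + 2 - 1 = t + 1 from rfl]
              rw [show (∑ s' : ↥K ⊕ Unit, (if (τ' ⟨0, Nat.succ_pos t⟩).1 = s' ∧
                    (x.1 = Sum.inl s ∧ (∃ k, (τ' k).1 = Sum.inr ())) then
                  pol h x.1 (t+2) x.2 * PK P K x.1 x.2 s' *
                    PrTraj (PK P K) pol (h ++ [x]) (t+1) (List.ofFn τ') else 0)) =
                ∑ s' : ↥K ⊕ Unit, (if (τ' ⟨0, Nat.succ_pos t⟩).1 = s' then
                  (if x.1 = Sum.inl s ∧ (∃ k, (τ' k).1 = Sum.inr ()) then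
                    pol h x.1 (t+2) x.2 * PK P K x.1 x.2 s' *
                      PrTraj (PK P K) pol (h ++ [x]) (t+1) (List.ofFn τ') else 0) else 0)
                from Finset.sum_congr rfl fun s' _ => by
                  split_ifs with h1 h2 h3 <;> first | rfl | tauto]
              rw [sum_if_eq' ((τ' ⟨0, Nat.succ_pos t⟩).1)
                (fun s' => if x.1 = Sum.inl s ∧ (∃ k, (τ' k).1 = Sum.inr ()) then
                  pol h x.1 (t+2) x.2 * PK P K x.1 x.2 s' *
                    PrTraj (PK P K) pol (h ++ [x]) (t+1) (List.ofFn τ') else 0)]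
              simp only [Fin.mk_zero]
            rw [Finset.sum_congr rfl fun τ' _ => h2 τ', Finset.sum_comm]
            have h3 : ∀ s' : ↥K ⊕ Unit, (∑ τ' : Fin (t+1) → (↥K ⊕ Unit) × A,
                (if (τ' ⟨0, Nat.succ_pos t⟩).1 = s' ∧
                    (x.1 = Sum.inl s ∧ (∃ k, (τ' k).1 = Sum.inr ())) then
                  pol h x.1 (t+2) x.2 * PK P K x.1 x.2 s' *
                    PrTraj (PK P K) pol (h ++ [x]) (t+1) (List.ofFn τ') else 0)) =
                (if x.1 = Sum.inl s then pol h x.1 (t+2) x.2 * PK P K x.1 x.2 s' else 0) *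
                  esc P K pol (t+1) s' (h ++ [x]) := by
              intro s'
              have h4 : ∀ τ' : Fin (t+1) → (↥K ⊕ Unit) × A,
                  (if (τ' ⟨0, Nat.succ_pos t⟩).1 = s' ∧
                      (x.1 = Sum.inl s ∧ (∃ k, (τ' k).1 = Sum.inr ())) then
                    pol h x.1 (t+2) x.2 * PK P K x.1 x.2 s' *
                      PrTraj (PK P K) pol (h ++ [x]) (t+1) (List.ofFn τ') else 0) =
                  (if x.1 = Sum.inl s then pol h x.1 (t+2) x.2 * PK P K x.1 x.2 s' else 0) *
                    (if (τ' ⟨0, Nat.succ_pos t⟩).1 = s' ∧ (∃ k, (τ' k).1 = Sum.inr ()) then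
                      PrTraj (PK P K) pol (h ++ [x]) (t+1) (List.ofFn τ') else 0) := by
                intro τ'
                split_ifs <;> first | tauto | ring
              rw [Finset.sum_congr rfl fun τ' _ => h4 τ', ← Finset.mul_sum,
                ih (h ++ [x]) s']
            rw [Finset.sum_congr rfl fun s' _ => h3 s']
            split
            · rw [Finset.sum_congr rfl (fun s' (_ : s' ∈ Finset.univ) =>
                mul_assoc (pol h x.1 (t+2) x.2) (PK P K x.1 x.2 s')
                  (esc P K pol (t+1) s' (h ++ [x]))), ← Finset.mul_sum]
            · simp [*]
          rw [Finset.sum_congr rfl fun x _ => h1 x, Fintype.sum_prod_type]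
          have h5 : ∀ st : ↥K ⊕ Unit, (∑ a : A, if st = Sum.inl s then
              pol h st (t+2) a * ∑ s' : ↥K ⊕ Unit, PK P K st a s' *
                esc P K pol (t+1) s' (h ++ [(st, a)]) else 0) =
              (if st = Sum.inl s then ∑ a : A,
                pol h st (t+2) a * ∑ s' : ↥K ⊕ Unit, PK P K st a s' *
                  esc P K pol (t+1) s' (h ++ [(st, a)]) else 0) := by
            intro st; split
            · rfl
            · simp
          rw [Finset.sum_congr rfl fun st _ => h5 st, sum_if_eq]
          rw [esc]

end EoE

open Classical in
/-- Explore-or-Exploit Lemma.  Let `K ⊆ S`, `s ∈ K`, `T ≥ 1`, and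
`0 ≤ W x ≤ G` whenever `0 ≤ x i ≤ T` for all `i`.  Then for every `0 < α < 1`, either
(i) some history-dependent policy on the induced MOMDP `M_K` achieves
`V^π_{M_K}(s, 0, [], T) ≥ V*_M(s, 0, T) − α`; or (ii) some history-dependent policy on
`M_K` reaches the absorbing exit state `⊥` within `T` steps with probability
exceeding `α/G`. -/
theorem explore_or_exploit {S A : Type} [Fintype S] [Fintype A]
    [Nonempty S] [Nonempty A] [DecidableEq S] {d : ℕ} (hd : 1 ≤ d)
    (P : S → A → S → ℝ) (hP0 : ∀ s a s', 0 ≤ P s a s') (hP1 : ∀ s a, ∑ s', P s a s' = 1)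
    (R : S → A → Fin d → ℝ) (hR0 : ∀ s a i, 0 ≤ R s a i) (hR1 : ∀ s a i, R s a i ≤ 1)
    (γ : ℝ) (hγ0 : 0 ≤ γ) (hγ1 : γ < 1) (T : ℕ) (hT : 1 ≤ T)
    (W : (Fin d → ℝ) → ℝ) (G : ℝ) (hG : 0 < G)
    (hWbd : ∀ x : Fin d → ℝ, (∀ i, 0 ≤ x i ∧ x i ≤ T) → 0 ≤ W x ∧ W x ≤ G)
    (K : Finset S) (s : S) (hs : s ∈ K)
    (α : ℝ) (hα0 : 0 < α) (hα1 : α < 1) :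
    (∃ pol : List ((↥K ⊕ Unit) × A) → (↥K ⊕ Unit) → ℕ → A → ℝ,
      (∀ h st t a, 0 ≤ pol h st t a) ∧ (∀ h st t, ∑ a, pol h st t a = 1) ∧
      Vpol (PK P K) (RK R K) γ T W pol T (Sum.inl ⟨s, hs⟩) 0 [] ≥
        Vstar P R γ T W T s 0 - α) ∨
    (∃ pol : List ((↥K ⊕ Unit) × A) → (↥K ⊕ Unit) → ℕ → A → ℝ,
      (∀ h st t a, 0 ≤ pol h st t a) ∧ (∀ h st t, ∑ a, pol h st t a = 1) ∧
      (∑ τ : Fin T → (↥K ⊕ Unit) × A,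
        (if (τ ⟨0, hT⟩).1 = Sum.inl ⟨s, hs⟩ ∧ (∃ k : Fin T, (τ k).1 = Sum.inr ())
          then PrTraj (PK P K) pol [] T (List.ofFn τ) else 0)) > α / G) := by
  obtain ⟨t, rfl⟩ : ∃ t, T = t + 1 := ⟨T - 1, by omega⟩
  set pol := EoE.polK P R γ (t+1) W K with hpol
  have hp0 := EoE.polK_nonneg P R γ (t+1) W K
  have hp1 := EoE.polK_sum P R γ (t+1) W K
  by_cases hcase : (∑ τ : Fin (t+1) → (↥K ⊕ Unit) × A,
      (if (τ ⟨0, hT⟩).1 = Sum.inl ⟨s, hs⟩ ∧ (∃ k : Fin (t+1), (τ k).1 = Sum.inr ())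
        then PrTraj (PK P K) pol [] (t+1) (List.ofFn τ) else 0)) > α / G
  · exact Or.inr ⟨pol, hp0, hp1, hcase⟩
  · left
    refine ⟨pol, hp0, hp1, ?_⟩
    push_neg at hcase
    have hesc : (∑ τ : Fin (t+1) → (↥K ⊕ Unit) × A,
        (if (τ ⟨0, hT⟩).1 = Sum.inl ⟨s, hs⟩ ∧ (∃ k : Fin (t+1), (τ k).1 = Sum.inr ())
          then PrTraj (PK P K) pol [] (t+1) (List.ofFn τ) else 0)) =
        EoE.esc P K pol (t+1) (Sum.inl ⟨s, hs⟩) [] :=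
      EoE.esc_eq P hP1 K pol hp1 t [] (Sum.inl ⟨s, hs⟩)
    have hmain := EoE.main_ineq P hP0 hP1 R hR0 hR1 γ hγ0 hγ1 (t+1) W G hG hWbd K
      (t+1) le_rfl [] (by simp) ⟨s, hs⟩
    have hv0 : EoE.vOf R K γ ([] : List ((↥K ⊕ Unit) × A)) = 0 := rfl
    rw [hv0, ← hesc] at hmain
    have hGQ : G * (∑ τ : Fin (t+1) → (↥K ⊕ Unit) × A,
        (if (τ ⟨0, hT⟩).1 = Sum.inl ⟨s, hs⟩ ∧ (∃ k : Fin (t+1), (τ k).1 = Sum.inr ())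
          then PrTraj (PK P K) pol [] (t+1) (List.ofFn τ) else 0)) ≤ α := by
      calc G * _ ≤ G * (α / G) := mul_le_mul_of_nonneg_left hcase hG.le
        _ = α := by field_simp
    linarith
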